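/- Let H be a real Hilbert space, l ≥ 1, and let ψ : H → ℝ^l be Fréchet differentiable. Let a ∈ ℝ^l and let h₀ : ℝ^l → H be Fréchet differentiable at a with ψ(h₀(y)) = y for all y in a neighbourhood of a. Suppose q ∈ ℝ^l satisfies h₀(a) = (Dψ(h₀(a)))*(q), where (Dψ(h₀(a)))* : ℝ^l → H is the adjoint of the Fréchet derivative Dψ(h₀(a)) : H → ℝ^l. Then the function Λ(y) := (1/2)‖h₀(y)‖²_H is differentiable at a and its derivative is the linear functional v ↦ ⟨q, v⟩, i.e. Λ′(a) = q. -/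

import Mathlib

open RealInnerProductSpace

/-- Derivative of the energy `Λ(y) = (1/2)‖h₀(y)‖²` along a family of controls with
`ψ(h₀(y)) = y`, when `h₀(a) = (Dψ(h₀(a)))* q`: one has `Λ′(a) = q` (i.e. the derivative
is the linear functional `v ↦ ⟨q, v⟩`). -/
theorem stmt_2 {H : Type*} [NormedAddCommGroup H] [InnerProductSpace ℝ H] [CompleteSpace H]
    {l : ℕ} (hl : 1 ≤ l)
    (ψ : H → EuclideanSpace ℝ (Fin l)) (hψ : Differentiable ℝ ψ)
    (a : EuclideanSpace ℝ (Fin l)) (h₀ : EuclideanSpace ℝ (Fin l) → H)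
    (hdiff : DifferentiableAt ℝ h₀ a)
    (hsec : ∀ᶠ y in nhds a, ψ (h₀ y) = y)
    (q : EuclideanSpace ℝ (Fin l))
    (hq : h₀ a = ContinuousLinearMap.adjoint (fderiv ℝ ψ (h₀ a)) q) :
    HasFDerivAt (fun y => (1/2 : ℝ) * ‖h₀ y‖ ^ 2) (innerSL ℝ q) a := by
  set D := fderiv ℝ h₀ a with hD
  have hDa : HasFDerivAt h₀ D a := hdiff.hasFDerivAt
  -- chain rule: Dψ(h₀ a) ∘ D = id
  have hcomp : HasFDerivAt (fun y => ψ (h₀ y)) ((fderiv ℝ ψ (h₀ a)).comp D) a :=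
    (hψ (h₀ a)).hasFDerivAt.comp a hDa
  have hid : HasFDerivAt (fun y => ψ (h₀ y))
      (ContinuousLinearMap.id ℝ (EuclideanSpace ℝ (Fin l))) a := by
    have : HasFDerivAt (fun y : EuclideanSpace ℝ (Fin l) => y)
        (ContinuousLinearMap.id ℝ (EuclideanSpace ℝ (Fin l))) a := hasFDerivAt_id a
    exact this.congr_of_eventuallyEq hsec
  have heq : (fderiv ℝ ψ (h₀ a)).comp D = ContinuousLinearMap.id ℝ (EuclideanSpace ℝ (Fin l)) :=
    hcomp.unique hid
  -- derivative of inner product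
  have hinner : HasFDerivAt (fun y => ⟪h₀ y, h₀ y⟫)
      ((fderivInnerCLM ℝ (h₀ a, h₀ a)).comp (D.prod D)) a := hDa.inner ℝ hDa
  have hmain : HasFDerivAt (fun y => (1/2 : ℝ) * ‖h₀ y‖ ^ 2)
      ((1/2 : ℝ) • ((fderivInnerCLM ℝ (h₀ a, h₀ a)).comp (D.prod D))) a := by
    have := hinner.const_mul (1/2 : ℝ)
    refine this.congr_of_eventuallyEq (Filter.Eventually.of_forall fun y => ?_)
    simp only [real_inner_self_eq_norm_sq]
  refine hmain.congr_fderiv ?_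
  refine ContinuousLinearMap.ext fun (v : EuclideanSpace ℝ (Fin l)) => ?_
  have h1 : ⟪q, (fderiv ℝ ψ (h₀ a)) (D v)⟫ = ⟪q, v⟫ := by
    have := congrArg (fun T => T v) heq
    simp only [ContinuousLinearMap.comp_apply, ContinuousLinearMap.id_apply] at this
    rw [this]
  have h2 : ⟪h₀ a, D v⟫ = ⟪q, v⟫ := by
    rw [hq, ContinuousLinearMap.adjoint_inner_left]
    exact h1
  simp only [ContinuousLinearMap.smul_apply, ContinuousLinearMap.comp_apply,
    ContinuousLinearMap.prod_apply, fderivInnerCLM_apply, innerSL_apply_apply]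
  have h3 : (inner ℝ (D v) (h₀ a) : ℝ) = inner ℝ q v := by rw [real_inner_comm]; exact h2
  rw [smul_eq_mul]; linarith [h3]
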